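/- Let k ≥ 3 and let a ≥ 1, a' ≥ 2, b, b' be integers with 0 ≤ b ≤ b' ≤ k−3 and C(k−1,2) + a(k−1) + b = C(k−2,2) + a'(k−2) + b'. Then f(k−2+a') − f(k−3+a') + f(b'+1) − f(b') ≥ f(k−1+a) − f(k−2+a) + f(b+1) − f(b). (Consequently, if h(C(m,k)) ≤ h(C(m,k−1)) and the parameters satisfy b ≤ b' < k−2, then also h(C(m+1,k)) ≤ h(C(m+1,k−1)).) -/

import Mathlib

/-- `f x = x * log x` (note `Real.log 0 = 0`, so `f 0 = 0`). -/
noncomputable def f (x : ℝ) : ℝ := x * Real.log x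

lemma increment_mono : MonotoneOn (fun x : ℝ => f (x + 1) - f x) (Set.Ici 0) := by
  have hderiv : ∀ x : ℝ, 0 < x →
      HasDerivAt (fun x : ℝ => f (x + 1) - f x)
        (Real.log (x + 1) - Real.log x) x := by
    intro x hx
    have h1 : HasDerivAt (fun x : ℝ => (x + 1) * Real.log (x + 1))
        (Real.log (x + 1) + 1) x := by
      have := (Real.hasDerivAt_mul_log (x := x + 1) (by linarith)).comp x
        ((hasDerivAt_id x).add_const 1)
      simpa [Function.comp_def] using this
    have h2 := Real.hasDerivAt_mul_log (ne_of_gt hx)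
    have := h1.sub h2
    simpa [f, Pi.sub_def] using this.congr_deriv (by ring)
  apply monotoneOn_of_deriv_nonneg (convex_Ici 0)
  · have : Continuous (fun x : ℝ => f (x + 1) - f x) := by
      simpa [f, Function.comp_def, Pi.add_def, Pi.sub_def] using ((Real.continuous_mul_log.comp
        (continuous_id.add continuous_const)).sub Real.continuous_mul_log)
    exact this.continuousOn
  · intro x hx
    rw [interior_Ici] at hx
    exact (hderiv x hx).differentiableAt.differentiableWithinAt
  · intro x hx
    rw [interior_Ici] at hx
    rw [(hderiv x hx).deriv]
    have := Real.log_le_log (by exact hx) (by linarith : x ≤ x + 1)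
    linarith

lemma incr_le {x y : ℝ} (hx : 0 ≤ x) (hxy : x ≤ y) :
    f (x + 1) - f x ≤ f (y + 1) - f y :=
  increment_mono hx (le_trans hx hxy) hxy

theorem increment_comparison_up (k a b a' b' : ℕ) (hk : 3 ≤ k)
    (ha : 1 ≤ a) (ha' : 2 ≤ a') (hbb' : b ≤ b') (hb' : b' ≤ k - 3)
    (hm : (k - 1).choose 2 + a * (k - 1) + b = (k - 2).choose 2 + a' * (k - 2) + b') :
    f ((k : ℝ) - 1 + a) - f ((k : ℝ) - 2 + a) + f ((b : ℝ) + 1) - f b ≤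
      f ((k : ℝ) - 2 + a') - f ((k : ℝ) - 3 + a') + f ((b' : ℝ) + 1) - f b' := by
  obtain ⟨n, rfl⟩ : ∃ n, k = n + 3 := ⟨k - 3, by omega⟩
  -- simplify the choose identity
  have hm' : n + 1 + a * (n + 2) + b = a' * (n + 1) + b' := by
    have h1 : (n + 3 - 1).choose 2 = (n + 1) + (n + 3 - 2).choose 2 := by
      have : n + 3 - 1 = (n + 1) + 1 := by omega
      rw [this, Nat.choose_succ_succ]
      have : n + 3 - 2 = n + 1 := by omega
      rw [this, Nat.choose_one_right]
    have h2 : n + 3 - 1 = n + 2 := by omega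
    have h3 : n + 3 - 2 = n + 1 := by omega
    rw [h1, h2, h3] at hm
    omega
  have hb'' : b' ≤ n := by omega
  have haa' : a + 1 ≤ a' := by
    by_contra h
    have h' : a' ≤ a := by omega
    have h2 : a' * (n + 1) ≤ a * (n + 1) := Nat.mul_le_mul_right _ h'
    have h3 : a * (n + 2) = a * (n + 1) + a := by ring
    omega
  have key1 : f ((n + 3 : ℝ) - 1 + a) - f ((n + 3 : ℝ) - 2 + a) ≤
      f ((n + 3 : ℝ) - 2 + a') - f ((n + 3 : ℝ) - 3 + a') := by
    have h1 : ((n + 3 : ℝ)) - 1 + a = ((n + 3 : ℝ) - 2 + a) + 1 := by ring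
    have h2 : ((n + 3 : ℝ)) - 2 + a' = ((n + 3 : ℝ) - 3 + a') + 1 := by ring
    rw [h1, h2]
    apply incr_le
    · have : (1 : ℝ) ≤ (a : ℝ) := by exact_mod_cast ha
      linarith
    · have : (a : ℝ) + 1 ≤ (a' : ℝ) := by exact_mod_cast haa'
      linarith
  have key2 : f ((b : ℝ) + 1) - f b ≤ f ((b' : ℝ) + 1) - f b' := by
    apply incr_le (Nat.cast_nonneg b)
    exact_mod_cast hbb'
  push_cast at key1 ⊢
  linarith
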